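/- Let S = K[x_1,...,x_n] with a fixed monomial order, and let J, E be ideals of S. If in(J ∩ E) = in(J) ∩ in(E), then in(J+E) = in(J) + in(E). -/

import Mathlib

open MvPolynomial

variable {K : Type*} [Field K] {n : ℕ}

/-- The leading monomial (exponent vector) of a polynomial with respect to a monomial
order `m`: the maximum of the support; by convention `lm m 0 = 0`. -/
noncomputable def lm (m : MonomialOrder (Fin n)) (f : MvPolynomial (Fin n) K) :
    Fin n →₀ ℕ :=
  m.toSyn.symm (f.support.sup fun d => m.toSyn d)

section lemmas
variable (m : MonomialOrder (Fin n))

lemma lm_mem_support {f : MvPolynomial (Fin n) K} (hf : f ≠ 0) : lm m f ∈ f.support := by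
  obtain ⟨b, hb, hsup⟩ := Finset.exists_mem_eq_sup f.support
    (MvPolynomial.support_nonempty.mpr hf) (fun d => m.toSyn d)
  rw [lm, hsup, AddEquiv.symm_apply_apply]
  exact hb

lemma coeff_lm_ne_zero {f : MvPolynomial (Fin n) K} (hf : f ≠ 0) :
    f.coeff (lm m f) ≠ 0 := by
  simpa [MvPolynomial.mem_support_iff] using lm_mem_support m hf

lemma toSyn_lm (f : MvPolynomial (Fin n) K) :
    m.toSyn (lm m f) = f.support.sup fun d => m.toSyn d := by
  rw [lm, AddEquiv.apply_symm_apply]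

lemma le_lm {f : MvPolynomial (Fin n) K} {d : Fin n →₀ ℕ} (hd : d ∈ f.support) :
    m.toSyn d ≤ m.toSyn (lm m f) := by
  rw [toSyn_lm]; exact Finset.le_sup hd

lemma coeff_eq_zero_of_lm_lt {f : MvPolynomial (Fin n) K} {d : Fin n →₀ ℕ}
    (hd : m.toSyn (lm m f) < m.toSyn d) : f.coeff d = 0 := by
  by_contra hc
  exact absurd (le_lm m (MvPolynomial.mem_support_iff.mpr hc)) (not_le.mpr hd)

lemma lm_monomial {μ : Fin n →₀ ℕ} {c : K} (hc : c ≠ 0) :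
    lm m (monomial μ c) = μ := by
  classical
  rw [lm, MvPolynomial.support_monomial, if_neg hc, Finset.sup_singleton,
    AddEquiv.symm_apply_apply]

lemma lm_monomial_mul {μ : Fin n →₀ ℕ} {c : K} (hc : c ≠ 0)
    {f : MvPolynomial (Fin n) K} (hf : f ≠ 0) :
    lm m (monomial μ c * f) = μ + lm m f := by
  classical
  have hne : (monomial μ c * f) ≠ 0 := mul_ne_zero (by simp [MvPolynomial.monomial_eq_zero, hc]) hf
  have hcoeff : (monomial μ c * f).coeff (μ + lm m f) ≠ 0 := by
    rw [MvPolynomial.coeff_monomial_mul]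
    exact mul_ne_zero hc (coeff_lm_ne_zero m hf)
  have h1 : m.toSyn (μ + lm m f) ≤ m.toSyn (lm m (monomial μ c * f)) :=
    le_lm m (MvPolynomial.mem_support_iff.mpr hcoeff)
  have h2 : m.toSyn (lm m (monomial μ c * f)) ≤ m.toSyn (μ + lm m f) := by
    have hmem := lm_mem_support m hne
    have := MvPolynomial.support_mul (monomial μ c) f hmem
    rw [MvPolynomial.support_monomial, if_neg hc] at this
    simp only [Finset.mem_add, Finset.mem_singleton] at this
    obtain ⟨a, ha, b, hb, hab⟩ := this
    subst ha
    rw [← hab, map_add, map_add]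
    exact add_le_add (le_refl _) (le_lm m hb)
  exact m.toSyn.injective (le_antisymm h2 h1)

lemma lm_add_of_lt {p q : MvPolynomial (Fin n) K} (hp : p ≠ 0)
    (hlt : m.toSyn (lm m q) < m.toSyn (lm m p)) :
    p + q ≠ 0 ∧ lm m (p + q) = lm m p := by
  have hco : (p + q).coeff (lm m p) ≠ 0 := by
    rw [MvPolynomial.coeff_add, coeff_eq_zero_of_lm_lt m hlt, add_zero]
    exact coeff_lm_ne_zero m hp
  have hne : p + q ≠ 0 := fun h => by simp [h] at hco
  refine ⟨hne, m.toSyn.injective (le_antisymm ?_ (le_lm m (MvPolynomial.mem_support_iff.mpr hco)))⟩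
  rw [toSyn_lm]
  apply Finset.sup_le
  intro d hd
  rw [MvPolynomial.mem_support_iff] at hd
  by_contra hlt'
  push_neg at hlt'
  have h1 : p.coeff d = 0 := coeff_eq_zero_of_lm_lt m hlt'
  have h2 : q.coeff d = 0 := coeff_eq_zero_of_lm_lt m (lt_trans hlt hlt')
  simp [MvPolynomial.coeff_add, h1, h2] at hd

end lemmas

/-- The initial ideal of `I`: the ideal generated by the leading monomials of the
nonzero elements of `I`. -/
noncomputable def initialIdeal (m : MonomialOrder (Fin n))
    (I : Ideal (MvPolynomial (Fin n) K)) : Ideal (MvPolynomial (Fin n) K) :=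
  Ideal.span {p | ∃ f ∈ I, f ≠ 0 ∧ p = monomial (lm m f) (1 : K)}

section lemmas2
variable (m : MonomialOrder (Fin n))

lemma monomial_lm_mem_initialIdeal {I : Ideal (MvPolynomial (Fin n) K)}
    {f : MvPolynomial (Fin n) K} (hf : f ∈ I) (h0 : f ≠ 0) :
    monomial (lm m f) (1 : K) ∈ initialIdeal m I :=
  Ideal.subset_span ⟨f, hf, h0, rfl⟩

lemma initialIdeal_eq_span_image (I : Ideal (MvPolynomial (Fin n) K)) :
    initialIdeal m I =
      Ideal.span ((fun μ => monomial μ (1 : K)) ''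
        {μ | ∃ f ∈ I, f ≠ 0 ∧ lm m f = μ}) := by
  unfold initialIdeal
  congr 1
  ext p
  constructor
  · rintro ⟨f, hf, h0, rfl⟩
    exact ⟨lm m f, ⟨f, hf, h0, rfl⟩, rfl⟩
  · rintro ⟨μ, ⟨f, hf, h0, rfl⟩, rfl⟩
    exact ⟨f, hf, h0, rfl⟩

lemma exists_lm_eq_of_monomial_mem {I : Ideal (MvPolynomial (Fin n) K)}
    {δ : Fin n →₀ ℕ} (hδ : monomial δ (1 : K) ∈ initialIdeal m I) :
    ∃ g ∈ I, g ≠ 0 ∧ lm m g = δ := by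
  classical
  rw [initialIdeal_eq_span_image, MvPolynomial.mem_ideal_span_monomial_image] at hδ
  have hsupp : δ ∈ (monomial δ (1 : K)).support := by
    rw [MvPolynomial.support_monomial, if_neg one_ne_zero]; exact Finset.mem_singleton_self δ
  obtain ⟨μ, ⟨f, hfI, hf0, hlm⟩, hle⟩ := hδ δ hsupp
  refine ⟨monomial (δ - μ) 1 * f, Ideal.mul_mem_left _ _ hfI,
    mul_ne_zero (by simp) hf0, ?_⟩
  rw [lm_monomial_mul m one_ne_zero hf0, hlm, tsub_add_cancel_of_le hle]

lemma initialIdeal_mono {I I' : Ideal (MvPolynomial (Fin n) K)} (h : I ≤ I') :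
    initialIdeal m I ≤ initialIdeal m I' :=
  Ideal.span_mono (fun p hp => by obtain ⟨f, hf, h0, rfl⟩ := hp; exact ⟨f, h hf, h0, rfl⟩)

end lemmas2

/-- `G` is a Gröbner basis of `I`: a finite set of nonzero polynomials generating `I`
whose leading monomials generate the initial ideal of `I`. -/
def IsGroebnerBasis (m : MonomialOrder (Fin n)) (I : Ideal (MvPolynomial (Fin n) K))
    (G : Set (MvPolynomial (Fin n) K)) : Prop :=
  G.Finite ∧ (0 : MvPolynomial (Fin n) K) ∉ G ∧ Ideal.span G = I ∧
    Ideal.span ((fun g => monomial (lm m g) (1 : K)) '' G) = initialIdeal m I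

/-- The S-polynomial `S(f,g)` with respect to the monomial order `m`. -/
noncomputable def sPoly (m : MonomialOrder (Fin n)) (f g : MvPolynomial (Fin n) K) :
    MvPolynomial (Fin n) K :=
  monomial (lm m f ⊔ lm m g - lm m f) (f.coeff (lm m f))⁻¹ * f -
    monomial (lm m f ⊔ lm m g - lm m g) (g.coeff (lm m g))⁻¹ * g

/-- An ideal is a monomial ideal if it is generated by monomials. -/
def IsMonomialIdeal (I : Ideal (MvPolynomial (Fin n) K)) : Prop :=
  ∃ M : Set (Fin n →₀ ℕ), I = Ideal.span ((fun μ => (monomial μ (1 : K))) '' M)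

/-- If `in(J ∩ E) = in(J) ∩ in(E)`, then `in(J+E) = in(J) + in(E)`. -/
theorem stmt3 (m : MonomialOrder (Fin n)) (J E : Ideal (MvPolynomial (Fin n) K))
    (h : initialIdeal m (J ⊓ E) = initialIdeal m J ⊓ initialIdeal m E) :
    initialIdeal m (J + E) = initialIdeal m J + initialIdeal m E := by
  apply le_antisymm
  · rw [Ideal.add_eq_sup, Ideal.add_eq_sup]
    have key : ∀ b : m.syn, ∀ p q : MvPolynomial (Fin n) K, p ∈ J → q ∈ E → p + q ≠ 0 →
        m.toSyn (lm m p) ≤ b → m.toSyn (lm m q) ≤ b →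
        (monomial (lm m (p + q)) (1 : K)) ∈ initialIdeal m J ⊔ initialIdeal m E := by
      intro b
      induction b using WellFoundedLT.induction with
      | _ b ih =>
      intro p q hpJ hqE hne hpb hqb
      rcases eq_or_ne p 0 with rfl | hp0
      · rw [zero_add] at hne ⊢
        exact Submodule.mem_sup_right (monomial_lm_mem_initialIdeal m hqE hne)
      rcases eq_or_ne q 0 with rfl | hq0
      · rw [add_zero] at hne ⊢
        exact Submodule.mem_sup_left (monomial_lm_mem_initialIdeal m hpJ hne)
      rcases lt_trichotomy (m.toSyn (lm m p)) (m.toSyn (lm m q)) with hlt | heq | hlt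
      · obtain ⟨-, hlm⟩ := lm_add_of_lt m hq0 hlt
        rw [add_comm q p] at hlm
        rw [hlm]
        exact Submodule.mem_sup_right (monomial_lm_mem_initialIdeal m hqE hq0)
      · have hδ : lm m p = lm m q := m.toSyn.injective heq
        set δ := lm m q with hδdef
        have hmemJ : monomial δ (1 : K) ∈ initialIdeal m J := by
          have := monomial_lm_mem_initialIdeal m hpJ hp0
          rwa [hδ] at this
        have hmemE : monomial δ (1 : K) ∈ initialIdeal m E :=
          monomial_lm_mem_initialIdeal m hqE hq0
        have hmem : monomial δ (1 : K) ∈ initialIdeal m (J ⊓ E) := by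
          rw [h]; exact Submodule.mem_inf.mpr ⟨hmemJ, hmemE⟩
        obtain ⟨g, hgJE, hg0, hglm⟩ := exists_lm_eq_of_monomial_mem m hmem
        obtain ⟨hgJ, hgE⟩ := Submodule.mem_inf.mp hgJE
        have hgc : g.coeff δ ≠ 0 := by
          have := coeff_lm_ne_zero m hg0; rwa [hglm] at this
        set c : K := p.coeff δ * (g.coeff δ)⁻¹ with hc
        set p' := p - C c * g with hp'def
        set q' := q + C c * g with hq'def
        have hsum : p + q = p' + q' := by ring
        have hp'J : p' ∈ J := J.sub_mem hpJ (Ideal.mul_mem_left _ _ hgJ)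
        have hq'E : q' ∈ E := E.add_mem hqE (Ideal.mul_mem_left _ _ hgE)
        have hp'δ : p'.coeff δ = 0 := by
          rw [hp'def, MvPolynomial.coeff_sub, MvPolynomial.coeff_C_mul, hc,
            mul_assoc, inv_mul_cancel₀ hgc, mul_one, sub_self]
        have hhigh : ∀ d : Fin n →₀ ℕ, m.toSyn δ < m.toSyn d →
            p.coeff d = 0 ∧ q.coeff d = 0 ∧ g.coeff d = 0 := by
          intro d hd
          refine ⟨coeff_eq_zero_of_lm_lt m ?_, coeff_eq_zero_of_lm_lt m ?_,
            coeff_eq_zero_of_lm_lt m ?_⟩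
          · rwa [hδ]
          · exact hd
          · rwa [hglm]
        have hcoeffp' : ∀ d : Fin n →₀ ℕ, m.toSyn δ < m.toSyn d → p'.coeff d = 0 := by
          intro d hd
          obtain ⟨h1, -, h3⟩ := hhigh d hd
          rw [hp'def, MvPolynomial.coeff_sub, MvPolynomial.coeff_C_mul, h1, h3,
            mul_zero, sub_self]
        have hcoeffq' : ∀ d : Fin n →₀ ℕ, m.toSyn δ < m.toSyn d → q'.coeff d = 0 := by
          intro d hd
          obtain ⟨-, h2, h3⟩ := hhigh d hd
          rw [hq'def, MvPolynomial.coeff_add, MvPolynomial.coeff_C_mul, h2, h3,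
            mul_zero, add_zero]
        have hp'lm : p' ≠ 0 → m.toSyn (lm m p') < m.toSyn δ := by
          intro hp'0
          have hmem' := lm_mem_support m hp'0
          rw [MvPolynomial.mem_support_iff] at hmem'
          rcases lt_trichotomy (m.toSyn (lm m p')) (m.toSyn δ) with h1 | h1 | h1
          · exact h1
          · exfalso
            have := m.toSyn.injective h1
            rw [this, hp'δ] at hmem'
            exact hmem' rfl
          · exact absurd (hcoeffp' _ h1) hmem'
        rw [hsum] at hne ⊢
        rcases eq_or_ne p' 0 with hp'0 | hp'0
        · rw [hp'0, zero_add] at hne ⊢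
          exact Submodule.mem_sup_right (monomial_lm_mem_initialIdeal m hq'E hne)
        rcases eq_or_ne q' 0 with hq'0 | hq'0
        · rw [hq'0, add_zero] at hne ⊢
          exact Submodule.mem_sup_left (monomial_lm_mem_initialIdeal m hp'J hne)
        rcases lt_trichotomy (m.toSyn (lm m p')) (m.toSyn (lm m q')) with hlt | heq' | hlt
        · obtain ⟨-, hlm⟩ := lm_add_of_lt m hq'0 hlt
          rw [add_comm q' p'] at hlm
          rw [hlm]
          exact Submodule.mem_sup_right (monomial_lm_mem_initialIdeal m hq'E hq'0)
        · have hlt1 : m.toSyn (lm m p') < m.toSyn δ := hp'lm hp'0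
          have hltb : m.toSyn (lm m p') < b := lt_of_lt_of_le hlt1 hqb
          exact ih _ hltb p' q' hp'J hq'E hne le_rfl heq'.symm.le
        · obtain ⟨-, hlm⟩ := lm_add_of_lt m hp'0 hlt
          rw [hlm]
          exact Submodule.mem_sup_left (monomial_lm_mem_initialIdeal m hp'J hp'0)
      · obtain ⟨-, hlm⟩ := lm_add_of_lt m hp0 hlt
        rw [hlm]
        exact Submodule.mem_sup_left (monomial_lm_mem_initialIdeal m hpJ hp0)
    rw [initialIdeal, Ideal.span_le]
    rintro x ⟨f, hf, hf0, rfl⟩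
    obtain ⟨p, hpJ, q, hqE, rfl⟩ := Submodule.mem_sup.mp hf
    exact key (max (m.toSyn (lm m p)) (m.toSyn (lm m q))) p q hpJ hqE hf0
      (le_max_left _ _) (le_max_right _ _)
  · rw [Ideal.add_eq_sup, Ideal.add_eq_sup]
    exact sup_le (initialIdeal_mono m le_sup_left) (initialIdeal_mono m le_sup_right)
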